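/- Let X be a compact Hausdorff abelian topological group, let A be a continuous group automorphism of X that is quasi-unipotent of type (m,l) (A^m = I + N with N^l = 0), let b ∈ X be an element of finite order, and let T x = A x + b. Let φ : X → ℂ be a continuous character of X and x ∈ X. Then for every p with 1 ≤ p ≤ m there exist a real polynomial P₁ of degree at most l−1 and a polynomial P₂ with rational coefficients such that φ(T^n x) = e^{2πi (P₁(q)+P₂(q))} for every n ≥ l of the form n = qm + p with q ∈ ℕ. -/

import Mathlib

open Finset

private lemma hockey' (q t : ℕ) : ∑ j ∈ range q, j.choose t = q.choose (t + 1) := by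
  induction q with
  | zero => simp
  | succ q ih => rw [sum_range_succ, ih, Nat.choose_succ_succ, Nat.add_comm]

private lemma binom_trunc {R : Type*} [Ring R] (N : R) (l : ℕ) (hN : N ^ l = 0) (q : ℕ) :
    (1 + N) ^ q = ∑ j ∈ range l, (q.choose j) • N ^ j := by
  rw [add_comm, (Commute.one_right N).add_pow q]
  have h1 : ∀ j, N ^ j * 1 ^ (q - j) * (q.choose j : R) = (q.choose j) • N ^ j := by
    intro j
    rw [one_pow, mul_one, nsmul_eq_mul, (Nat.cast_commute (q.choose j) (N ^ j)).eq]
  simp_rw [h1]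
  have e1 : ∑ j ∈ range (q+1), (q.choose j) • N ^ j
      = ∑ j ∈ range (q+1) ∪ range l, (q.choose j) • N ^ j := by
    refine Finset.sum_subset Finset.subset_union_left fun j _ hj => ?_
    rw [Finset.mem_range, not_lt] at hj
    rw [Nat.choose_eq_zero_of_lt hj, zero_smul]
  have e2 : ∑ j ∈ range l, (q.choose j) • N ^ j
      = ∑ j ∈ range (q+1) ∪ range l, (q.choose j) • N ^ j := by
    refine Finset.sum_subset Finset.subset_union_right fun j _ hj => ?_
    rw [Finset.mem_range, not_lt] at hj
    rw [pow_eq_zero_of_le hj hN, smul_zero]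
  rw [e1, e2]

private lemma geom_mul {R : Type*} [Ring R] (a : R) (m q : ℕ) :
    ∑ i ∈ range (q * m), a ^ i = (∑ j ∈ range q, (a ^ m) ^ j) * (∑ i ∈ range m, a ^ i) := by
  induction q with
  | zero => simp
  | succ q ih =>
    rw [add_mul, one_mul, Finset.sum_range_add, ih, sum_range_succ, add_mul]
    congr 1
    rw [Finset.mul_sum]
    refine Finset.sum_congr rfl fun i _ => ?_
    rw [pow_add, ← pow_mul, mul_comm m q]

private lemma geom_binom {R : Type*} [Ring R] (N : R) (l : ℕ) (hN : N ^ l = 0) (q : ℕ) :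
    ∑ j ∈ range q, (1 + N) ^ j = ∑ t ∈ range l, (q.choose (t + 1)) • N ^ t := by
  calc ∑ j ∈ range q, (1 + N) ^ j
      = ∑ j ∈ range q, ∑ t ∈ range l, (j.choose t) • N ^ t :=
        Finset.sum_congr rfl fun j _ => binom_trunc N l hN j
    _ = ∑ t ∈ range l, (∑ j ∈ range q, j.choose t) • N ^ t := by
        rw [Finset.sum_comm]
        exact Finset.sum_congr rfl fun t _ => (Finset.sum_smul).symm
    _ = _ := by simp_rw [hockey']

section char
variable {X : Type*} [AddCommGroup X] (φ : X → ℂ)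

private lemma phi_zero (hφmul : ∀ x y : X, φ (x + y) = φ x * φ y)
    (hφabs : ∀ x : X, ‖φ x‖ = 1) : φ 0 = 1 := by
  have h := hφmul 0 0
  rw [add_zero] at h
  have h0 : φ 0 ≠ 0 := by
    intro h'
    simpa [h'] using hφabs 0
  have h2 : φ 0 * 1 = φ 0 * φ 0 := by rw [mul_one]; exact h
  exact (mul_left_cancel₀ h0 h2).symm

private lemma phi_nsmul (hφmul : ∀ x y : X, φ (x + y) = φ x * φ y)
    (hφabs : ∀ x : X, ‖φ x‖ = 1) (c : ℕ) (y : X) : φ (c • y) = φ y ^ c := by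
  induction c with
  | zero => simpa using phi_zero φ hφmul hφabs
  | succ c ih => rw [succ_nsmul, hφmul, ih, pow_succ]

private lemma phi_sum (hφmul : ∀ x y : X, φ (x + y) = φ x * φ y)
    (hφabs : ∀ x : X, ‖φ x‖ = 1) {ι : Type*} (s : Finset ι) (f : ι → X) :
    φ (∑ i ∈ s, f i) = ∏ i ∈ s, φ (f i) := by
  classical
  induction s using Finset.induction_on with
  | empty => simpa using phi_zero φ hφmul hφabs
  | insert a s h ih => rw [Finset.sum_insert h, Finset.prod_insert h, hφmul, ih]

private lemma two_pi_I_ne : 2 * (Real.pi : ℂ) * Complex.I ≠ 0 := by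
  have hπ : (Real.pi : ℂ) ≠ 0 := by exact_mod_cast Real.pi_ne_zero
  exact mul_ne_zero (mul_ne_zero two_ne_zero hπ) Complex.I_ne_zero

private lemma phi_exp (hφabs : ∀ x : X, ‖φ x‖ = 1) (y : X) :
    ∃ θ : ℝ, φ y = Complex.exp (2 * Real.pi * Complex.I * θ) := by
  refine ⟨(φ y).arg / (2 * Real.pi), ?_⟩
  have h := Complex.norm_mul_exp_arg_mul_I (φ y)
  rw [hφabs, Complex.ofReal_one, one_mul] at h
  have hπ : (Real.pi : ℂ) ≠ 0 := by exact_mod_cast Real.pi_ne_zero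
  have h2 : 2 * (Real.pi : ℂ) * Complex.I * (((φ y).arg / (2 * Real.pi) : ℝ) : ℂ)
      = ((φ y).arg : ℂ) * Complex.I := by
    push_cast
    field_simp
  rw [h2, h]

private lemma phi_exp_rat (hφmul : ∀ x y : X, φ (x + y) = φ x * φ y)
    (hφabs : ∀ x : X, ‖φ x‖ = 1) (k : ℕ) (hk : 1 ≤ k) (y : X) (hy : k • y = 0) :
    ∃ r : ℚ, φ y = Complex.exp (2 * Real.pi * Complex.I * (r : ℝ)) := by
  obtain ⟨θ, hθ⟩ := phi_exp φ hφabs y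
  have hiter : φ y ^ k = 1 := by
    rw [← phi_nsmul φ hφmul hφabs, hy]
    exact phi_zero φ hφmul hφabs
  rw [hθ, ← Complex.exp_nat_mul, Complex.exp_eq_one_iff] at hiter
  obtain ⟨n, hn⟩ := hiter
  have hk' : (k : ℂ) ≠ 0 := by exact_mod_cast Nat.one_le_iff_ne_zero.mp hk
  have h3 : ((θ : ℂ) * k - n) * (2 * Real.pi * Complex.I) = 0 := by linear_combination hn
  have h4 : (θ : ℂ) * k - n = 0 := by
    rcases mul_eq_zero.mp h3 with h | h
    · exact h
    · exact absurd h two_pi_I_ne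
  have hθval : (θ : ℂ) = (n : ℂ) / (k : ℂ) := by
    field_simp
    linear_combination h4
  refine ⟨(n : ℚ) / (k : ℚ), ?_⟩
  rw [hθ]
  congr 1
  push_cast
  rw [hθval]

private lemma phi_sum_exp (hφmul : ∀ x y : X, φ (x + y) = φ x * φ y)
    (hφabs : ∀ x : X, ‖φ x‖ = 1)
    (l : ℕ) (c : ℕ → ℕ) (y : ℕ → X) (θ : ℕ → ℝ)
    (hθ : ∀ j, φ (y j) = Complex.exp (2 * Real.pi * Complex.I * θ j)) :
    φ (∑ j ∈ range l, c j • y j) =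
      Complex.exp (2 * Real.pi * Complex.I * ((∑ j ∈ range l, (c j : ℝ) * θ j : ℝ) : ℂ)) := by
  rw [phi_sum φ hφmul hφabs]
  have h : ∀ j ∈ range l,
      φ (c j • y j) = Complex.exp ((c j : ℂ) * (2 * Real.pi * Complex.I * θ j)) := by
    intro j _
    rw [phi_nsmul φ hφmul hφabs, hθ, ← Complex.exp_nat_mul]
  rw [Finset.prod_congr rfl h, ← Complex.exp_sum]
  congr 1
  push_cast
  rw [Finset.mul_sum]
  exact Finset.sum_congr rfl fun j _ => by ring

end char

private lemma aut_pow {X : Type*} [AddCommGroup X] (A : AddAut X) (a : AddMonoid.End X)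
    (h : ∀ y, a y = A y) (n : ℕ) (x : X) : (n • A) x = (a ^ n) x := by
  induction n with
  | zero => rfl
  | succ n ih =>
    rw [succ_nsmul', pow_succ', AddAut.add_apply]
    show A ((n • A) x) = a ((a ^ n) x)
    rw [ih, h]

theorem character_orbit_polynomial_quasiUnipotent_finiteOrder
    {X : Type*} [AddCommGroup X] [TopologicalSpace X] [IsTopologicalAddGroup X]
    [CompactSpace X] [T2Space X]
    (m l : ℕ) (hm : 1 ≤ m) (hl : 1 ≤ l)
    (A : AddAut X) (hAcont : Continuous A) (hAsymm : Continuous A.symm)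
    (N : AddMonoid.End X)
    (hA : ∀ x : X, (m • A) x = x + N x) (hN : N ^ l = 0)
    (b : X) (hb : ∃ k : ℕ, 1 ≤ k ∧ k • b = 0)
    (T : X → X) (hT : ∀ x : X, T x = A x + b)
    (φ : X → ℂ) (hφcont : Continuous φ)
    (hφmul : ∀ x y : X, φ (x + y) = φ x * φ y)
    (hφabs : ∀ x : X, ‖φ x‖ = 1)
    (x : X) :
    ∀ p : ℕ, 1 ≤ p → p ≤ m →
      ∃ (P₁ : Polynomial ℝ) (P₂ : Polynomial ℚ), P₁.natDegree ≤ l - 1 ∧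
        ∀ n q : ℕ, n = q * m + p → l ≤ n →
          φ (T^[n] x) = Complex.exp (2 * Real.pi * Complex.I *
            (P₁.eval (q : ℝ) + (↑(P₂.eval ((q : ℕ) : ℚ)) : ℝ))) := by
  intro p hp1 hpm
  obtain ⟨k, hk1, hkb⟩ := hb
  set a : AddMonoid.End X := A.toAddMonoidHom with ha_def
  have haA : ∀ y : X, a y = A y := fun y => rfl
  have ham : a ^ m = 1 + N := by
    refine AddMonoidHom.ext fun y => ?_
    show (a ^ m) y = y + N y
    rw [← aut_pow A a haA m y]
    exact hA y
  -- orbit formula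
  have horbit : ∀ n : ℕ, T^[n] x = (a ^ n) x + (∑ i ∈ range n, a ^ i) b := by
    intro n
    induction n with
    | zero => simp
    | succ n ih =>
      rw [Function.iterate_succ_apply', ih, hT, map_add, geom_sum_succ, pow_succ']
      show A ((a ^ n) x) + A ((∑ i ∈ range n, a ^ i) b) + b
          = a ((a ^ n) x) + (a ((∑ i ∈ range n, a ^ i) b) + b)
      rw [haA, haA, add_assoc]
  -- base points
  set y : ℕ → X := fun j => (N ^ j) ((a ^ p) x) with hy_def
  set z : ℕ → X := fun t => (a ^ p) ((N ^ t) ((∑ i ∈ range m, a ^ i) b)) with hz_def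
  have hzk : ∀ t : ℕ, k • z t = 0 := by
    intro t
    show k • (a ^ p) ((N ^ t) ((∑ i ∈ range m, a ^ i) b)) = 0
    rw [← map_nsmul, ← map_nsmul, ← map_nsmul, hkb, map_zero, map_zero, map_zero]
  have hwk : k • (∑ i ∈ range p, a ^ i) b = 0 := by
    rw [← map_nsmul, hkb, map_zero]
  -- pick exponents
  choose θ hθ using fun j : ℕ => phi_exp φ hφabs (y j)
  choose r hr using fun t : ℕ => phi_exp_rat φ hφmul hφabs k hk1 (z t) (hzk t)
  obtain ⟨r₀, hr₀⟩ := phi_exp_rat φ hφmul hφabs k hk1 ((∑ i ∈ range p, a ^ i) b) hwk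
  -- polynomials
  set P₁ : Polynomial ℝ :=
    ∑ j ∈ range l, Polynomial.C (θ j / (j.factorial : ℝ)) * descPochhammer ℝ j with hP₁_def
  set P₂ : Polynomial ℚ := Polynomial.C r₀ +
    ∑ t ∈ range l, Polynomial.C (r t / ((t+1).factorial : ℚ)) * descPochhammer ℚ (t+1)
    with hP₂_def
  have hdeg : P₁.natDegree ≤ l - 1 := by
    refine Polynomial.natDegree_sum_le_of_forall_le _ _ fun j hj => ?_
    refine le_trans (Polynomial.natDegree_C_mul_le _ _) ?_
    rw [descPochhammer_natDegree]
    rw [Finset.mem_range] at hj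
    omega
  refine ⟨P₁, P₂, hdeg, ?_⟩
  intro n q hn hln
  subst hn
  -- endomorphism computations
  have h1 : (a ^ (q * m + p)) x = ∑ j ∈ range l, (q.choose j) • y j := by
    rw [pow_add, pow_mul', ham, binom_trunc N l hN q]
    show (∑ j ∈ range l, (q.choose j) • N ^ j) ((a ^ p) x) = _
    erw [AddMonoidHom.finset_sum_apply]
    rfl
  have h2 : (∑ i ∈ range (q * m + p), a ^ i) b
      = (∑ i ∈ range p, a ^ i) b + ∑ t ∈ range l, (q.choose (t+1)) • z t := by
    have e : ∑ i ∈ range (q * m + p), a ^ i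
        = (∑ i ∈ range p, a ^ i) +
          a ^ p * ((∑ t ∈ range l, (q.choose (t+1)) • N ^ t) * (∑ i ∈ range m, a ^ i)) := by
      rw [Nat.add_comm (q * m) p, Finset.sum_range_add]
      congr 1
      calc ∑ i ∈ range (q * m), a ^ (p + i)
          = a ^ p * ∑ i ∈ range (q * m), a ^ i := by
            rw [Finset.mul_sum]
            exact Finset.sum_congr rfl fun i _ => pow_add a p i
        _ = _ := by rw [geom_mul, ham, geom_binom N l hN q]
    erw [e, AddMonoidHom.add_apply]
    congr 1
    show (a ^ p) ((∑ t ∈ range l, (q.choose (t+1)) • N ^ t) ((∑ i ∈ range m, a ^ i) b)) = _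
    erw [AddMonoidHom.finset_sum_apply, map_sum]
    refine Finset.sum_congr rfl fun t _ => ?_
    show (a ^ p) ((q.choose (t+1)) • (N ^ t) _) = _
    rw [map_nsmul]
  have hTnx : T^[q * m + p] x = (∑ j ∈ range l, (q.choose j) • y j)
      + ((∑ i ∈ range p, a ^ i) b + ∑ t ∈ range l, (q.choose (t+1)) • z t) := by
    rw [horbit, h1, h2]
  -- evaluate polynomials
  have hfact₁ : ∀ j : ℕ, ((j.factorial : ℝ)) ≠ 0 := fun j => by
    exact_mod_cast j.factorial_ne_zero
  have hP₁eval : P₁.eval (q : ℝ) = ∑ j ∈ range l, (q.choose j : ℝ) * θ j := by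
    rw [hP₁_def, Polynomial.eval_finset_sum]
    refine Finset.sum_congr rfl fun j _ => ?_
    rw [Polynomial.eval_mul, Polynomial.eval_C, descPochhammer_eval_eq_descFactorial,
        Nat.descFactorial_eq_factorial_mul_choose]
    push_cast
    field_simp
  have hfact₂ : ∀ t : ℕ, (((t+1).factorial : ℚ)) ≠ 0 := fun t => by
    exact_mod_cast (t+1).factorial_ne_zero
  have hP₂eval : P₂.eval (q : ℚ) = r₀ + ∑ t ∈ range l, (q.choose (t+1) : ℚ) * r t := by
    rw [hP₂_def, Polynomial.eval_add, Polynomial.eval_C, Polynomial.eval_finset_sum]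
    congr 1
    refine Finset.sum_congr rfl fun t _ => ?_
    rw [Polynomial.eval_mul, Polynomial.eval_C, descPochhammer_eval_eq_descFactorial,
        Nat.descFactorial_eq_factorial_mul_choose]
    push_cast
    field_simp
  -- put everything together
  have hy' := phi_sum_exp φ hφmul hφabs l (fun j => q.choose j) y θ hθ
  have hz' := phi_sum_exp φ hφmul hφabs l (fun t => q.choose (t+1)) z (fun t => (r t : ℝ)) hr
  rw [hTnx, hφmul, hφmul, hy', hr₀, hz', ← Complex.exp_add, ← Complex.exp_add]
  congr 1
  rw [hP₁eval, hP₂eval]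
  push_cast
  ring
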